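/- arXiv:1201.0011 — 2 statements merged into one kernel-verified Lean document; each statement's English description precedes it below -/
import Mathlib

section
/- Sandwiched-projector lower bound: Let ρ be a positive semidefinite complex square matrix with Tr[ρ] ≤ 1, and let Π, Π̄ be matrices over the same index type with 0 ≤ Π ≤ I and 0 ≤ Π̄ ≤ I. Then Tr[Π̄ Π Π̄ ρ] ≥ Tr[Π ρ] − ‖Π̄ ρ Π̄ − ρ‖₁. -/
open scoped Matrix ComplexOrder

open scoped MatrixOrder Matrix.Norms.L2Operator in
/-- The trace norm `‖A‖₁ = Tr[√(AᴴA)]` of a complex square matrix. -/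
noncomputable def traceNorm {d : Type*} [Fintype d] [DecidableEq d]
    (A : Matrix d d ℂ) : ℝ :=
  ((CFC.sqrt (Aᴴ * A)).trace).re

lemma trace_re_nonneg {d : Type*} [Fintype d] [DecidableEq d] {X : Matrix d d ℂ}
    (hX : X.PosSemidef) : 0 ≤ (X.trace).re := by
  have key : ∀ i, 0 ≤ (X i i).re := by
    intro i
    have h := hX.dotProduct_mulVec_nonneg (Pi.single i 1)
    have he : (dotProduct (star (Pi.single i 1)) (X *ᵥ Pi.single i 1)) = X i i := by
      simp [dotProduct, Matrix.mulVec, Pi.single_apply, Finset.sum_ite_eq,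
        apply_ite, mul_comm]
    rw [he] at h
    rw [Complex.le_def] at h
    simpa using h.1
  simpa [Matrix.trace, Matrix.diag, Complex.re_sum] using Finset.sum_nonneg fun i _ => key i

open scoped MatrixOrder Matrix.Norms.L2Operator in
lemma trace_mul_psd_re_nonneg {d : Type*} [Fintype d] [DecidableEq d]
    {P X : Matrix d d ℂ} (hP : P.PosSemidef) (hX : X.PosSemidef) :
    0 ≤ ((P * X).trace).re := by
  obtain ⟨S, hSpsd, hS⟩ : ∃ S : Matrix d d ℂ, S.PosSemidef ∧ S * S = X :=
    ⟨CFC.sqrt X, Matrix.nonneg_iff_posSemidef.mp (CFC.sqrt_nonneg X),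
      CFC.sqrt_mul_sqrt_self X (Matrix.nonneg_iff_posSemidef.mpr hX)⟩
  have h1 : (P * X).trace = (S * P * S).trace := by
    rw [← hS, ← Matrix.mul_assoc, Matrix.trace_mul_cycle]
  rw [h1]
  refine trace_re_nonneg ?_
  have := hP.mul_mul_conjTranspose_same S
  rwa [hSpsd.isHermitian.eq] at this

lemma trace_mul_le_trace {d : Type*} [Fintype d] [DecidableEq d]
    {P X : Matrix d d ℂ} (hPI : ((1 : Matrix d d ℂ) - P).PosSemidef) (hX : X.PosSemidef) :
    ((P * X).trace).re ≤ (X.trace).re := by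
  have h := trace_mul_psd_re_nonneg hPI hX
  rw [Matrix.sub_mul, Matrix.one_mul, Matrix.trace_sub, Complex.sub_re] at h
  linarith

open scoped MatrixOrder Matrix.Norms.L2Operator in
lemma abs_decomp {d : Type*} [Fintype d] [DecidableEq d]
    {A : Matrix d d ℂ} (hA : A.IsHermitian) :
    ∃ T : Matrix d d ℂ, T = CFC.sqrt (Aᴴ * A) ∧
      (T - A).PosSemidef ∧ (T + A).PosSemidef := by
  set U : Matrix d d ℂ := (hA.eigenvectorUnitary : Matrix d d ℂ) with hU
  set lam := hA.eigenvalues with hlam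
  have hUU : star U * U = 1 := Unitary.coe_star_mul_self hA.eigenvectorUnitary
  have spec : A = U * Matrix.diagonal (fun i => ((lam i : ℝ) : ℂ)) * star U := by
    have := hA.spectral_theorem
    rw [Unitary.conjStarAlgAut_apply] at this
    exact this
  have conj_psd : ∀ f : d → ℝ, (∀ i, 0 ≤ f i) →
      (U * Matrix.diagonal (fun i => ((f i : ℝ) : ℂ)) * star U).PosSemidef := by
    intro f hf
    have hd : (Matrix.diagonal (fun i => ((f i : ℝ) : ℂ))).PosSemidef :=
      Matrix.posSemidef_diagonal_iff.mpr fun i => by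
        exact_mod_cast Complex.zero_le_real.mpr (hf i)
    have := hd.mul_mul_conjTranspose_same U
    rwa [← Matrix.star_eq_conjTranspose] at this
  have hmul : ∀ f g : d → ℝ,
      (U * Matrix.diagonal (fun i => ((f i : ℝ) : ℂ)) * star U) *
      (U * Matrix.diagonal (fun i => ((g i : ℝ) : ℂ)) * star U) =
      U * Matrix.diagonal (fun i => ((f i * g i : ℝ) : ℂ)) * star U := by
    intro f g
    simp only [Matrix.mul_assoc]
    rw [← Matrix.mul_assoc (star U) U, hUU, Matrix.one_mul,
      ← Matrix.mul_assoc (Matrix.diagonal _) (Matrix.diagonal _), Matrix.diagonal_mul_diagonal]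
    push_cast
    ring_nf
  set T : Matrix d d ℂ := U * Matrix.diagonal (fun i => ((|lam i| : ℝ) : ℂ)) * star U with hT
  have hTpsd : T.PosSemidef := conj_psd _ fun i => abs_nonneg _
  have hsq : T ^ 2 = Aᴴ * A := by
    rw [hA.eq, pow_two, hT, spec, hmul, hmul]
    simp only [abs_mul_abs_self]
  refine ⟨T, (CFC.sqrt_unique (by rw [← pow_two]; exact hsq)
    (Matrix.nonneg_iff_posSemidef.mpr hTpsd)).symm, ?_, ?_⟩
  · have h : T - A = U * Matrix.diagonal (fun i => ((|lam i| - lam i : ℝ) : ℂ)) * star U := by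
      rw [hT]
      conv_lhs => rw [spec]
      rw [← Matrix.sub_mul, ← Matrix.mul_sub, Matrix.diagonal_sub]
      congr 2
      ext i
      push_cast
      ring
    rw [h]
    exact conj_psd _ fun i => by simp [sub_nonneg, le_abs_self]
  · have h : T + A = U * Matrix.diagonal (fun i => ((|lam i| + lam i : ℝ) : ℂ)) * star U := by
      rw [hT]
      conv_lhs => rw [spec]
      rw [← Matrix.add_mul, ← Matrix.mul_add, Matrix.diagonal_add]
      congr 2
      ext i
      push_cast
      ring
    rw [h]
    exact conj_psd _ fun i => by linarith [neg_abs_le (lam i)]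

/-- Sandwiched-projector lower bound: for positive semidefinite `ρ` with `Tr[ρ] ≤ 1` and
`0 ≤ P, Pb ≤ I`, one has `Tr[Pb P Pb ρ] ≥ Tr[P ρ] − ‖Pb ρ Pb − ρ‖₁`. -/
theorem sandwiched_projector_lower_bound {d : Type*} [Fintype d] [DecidableEq d]
    (ρ P Pb : Matrix d d ℂ)
    (hρ : ρ.PosSemidef) (hρtr : (ρ.trace).re ≤ 1)
    (hP : P.PosSemidef) (hPI : ((1 : Matrix d d ℂ) - P).PosSemidef)
    (hPb : Pb.PosSemidef) (hPbI : ((1 : Matrix d d ℂ) - Pb).PosSemidef) :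
    ((P * ρ).trace).re - traceNorm (Pb * ρ * Pb - ρ) ≤ ((Pb * P * Pb * ρ).trace).re := by
  set A : Matrix d d ℂ := Pb * ρ * Pb - ρ with hAdef
  have hsand : (Pb * ρ * Pb).PosSemidef := by
    have := hρ.mul_mul_conjTranspose_same Pb
    rwa [hPb.isHermitian.eq] at this
  have hAh : A.IsHermitian := hsand.isHermitian.sub hρ.isHermitian
  obtain ⟨T, hTeq, hTm, hTp⟩ := abs_decomp hAh
  have hnorm : traceNorm A = (T.trace).re := by rw [traceNorm, ← hTeq]
  have hcyc : (Pb * P * Pb * ρ).trace = (P * (Pb * ρ * Pb)).trace := by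
    simp only [Matrix.mul_assoc]
    rw [Matrix.trace_mul_comm]
    simp only [Matrix.mul_assoc]
  have hsplit : (P * (Pb * ρ * Pb)).trace = (P * ρ).trace + (P * A).trace := by
    rw [hAdef, Matrix.mul_sub, Matrix.trace_sub]
    ring
  have h1 : 0 ≤ ((P * (T + A)).trace).re := trace_mul_psd_re_nonneg hP hTp
  have h2 : ((P * (T - A)).trace).re ≤ ((T - A).trace).re := trace_mul_le_trace hPI hTm
  have h3 : 0 ≤ ((T + A).trace).re := trace_re_nonneg hTp
  have e1 : ((P * (T + A)).trace).re = ((P * T).trace).re + ((P * A).trace).re := by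
    rw [Matrix.mul_add, Matrix.trace_add, Complex.add_re]
  have e2 : ((P * (T - A)).trace).re = ((P * T).trace).re - ((P * A).trace).re := by
    rw [Matrix.mul_sub, Matrix.trace_sub, Complex.sub_re]
  have e3 : ((T + A).trace).re = (T.trace).re + (A.trace).re := by
    rw [Matrix.trace_add, Complex.add_re]
  have e4 : ((T - A).trace).re = (T.trace).re - (A.trace).re := by
    rw [Matrix.trace_sub, Complex.sub_re]
  rw [hnorm, hcyc, hsplit, Complex.add_re]
  linarith [e1 ▸ h1, e2 ▸ (e4 ▸ h2), e3 ▸ h3]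
end

section
/- Error bound for a square-root measurement element: Let {P_k}_{k∈M} be a finite family of complex square matrices over a fixed finite index type with 0 ≤ P_k ≤ I for each k, and suppose S = Σ_k P_k is positive definite. Fix m ∈ M, set Λ_m = S^{−1/2} P_m S^{−1/2}, and let ρ be a density matrix. Then Tr[(I − Λ_m) ρ] ≤ 2 Tr[(I − P_m) ρ] + 4 Σ_{k ≠ m} Tr[P_k ρ]. -/
open scoped Matrix ComplexOrder
/-- The square root of a positive semidefinite matrix, as defined in the older Mathlib
(`Matrix.PosSemidef.sqrt`, since removed). -/
noncomputable def Matrix.PosSemidef.sqrt {n 𝕜 : Type*} [Fintype n] [DecidableEq n] [RCLike 𝕜]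
    {A : Matrix n n 𝕜} (hA : A.PosSemidef) : Matrix n n 𝕜 :=
  hA.1.eigenvectorUnitary.1 * Matrix.diagonal ((↑) ∘ (√·) ∘ hA.1.eigenvalues) *
    (star hA.1.eigenvectorUnitary : Matrix n n 𝕜)

namespace Matrix.PosSemidef

lemma posSemidef_sqrt {n 𝕜 : Type*} [Fintype n] [DecidableEq n] [RCLike 𝕜]
    {A : Matrix n n 𝕜} (hA : A.PosSemidef) : hA.sqrt.PosSemidef := by
  unfold Matrix.PosSemidef.sqrt
  have h := (Matrix.PosSemidef.diagonal (R := 𝕜) (n := n)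
    (d := ((↑) ∘ (√·) ∘ hA.1.eigenvalues)) (fun i => by
      simp only [Pi.zero_apply, Function.comp_apply]; exact RCLike.ofReal_nonneg.mpr (Real.sqrt_nonneg _))).mul_mul_conjTranspose_same
    (hA.1.eigenvectorUnitary.1)
  simpa [Matrix.star_eq_conjTranspose] using h

lemma sqrt_mul_self {n 𝕜 : Type*} [Fintype n] [DecidableEq n] [RCLike 𝕜]
    {A : Matrix n n 𝕜} (hA : A.PosSemidef) : hA.sqrt * hA.sqrt = A := by
  unfold Matrix.PosSemidef.sqrt
  set C : Matrix n n 𝕜 := hA.1.eigenvectorUnitary.1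
  set E := Matrix.diagonal ((↑) ∘ (√·) ∘ hA.1.eigenvalues : n → 𝕜)
  have hC : (star hA.1.eigenvectorUnitary : Matrix n n 𝕜) * C = 1 := by simp [C]
  have hE : E * E = Matrix.diagonal ((↑) ∘ hA.1.eigenvalues) := by
    simp only [E, Matrix.diagonal_mul_diagonal]
    congr 1; funext i
    simp only [Function.comp_apply]
    rw [← RCLike.ofReal_mul, Real.mul_self_sqrt (hA.eigenvalues_nonneg i)]
  calc C * E * (star hA.1.eigenvectorUnitary : Matrix n n 𝕜) * (C * E * (star hA.1.eigenvectorUnitary : Matrix n n 𝕜))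
      = C * E * ((star hA.1.eigenvectorUnitary : Matrix n n 𝕜) * C) * E * (star hA.1.eigenvectorUnitary : Matrix n n 𝕜) := by
        simp only [Matrix.mul_assoc]
    _ = C * (E * E) * (star hA.1.eigenvectorUnitary : Matrix n n 𝕜) := by
        rw [hC, Matrix.mul_one, Matrix.mul_assoc C E E]
    _ = A := by
        rw [hE]
        conv_rhs => rw [hA.1.spectral_theorem]
        simp [C]
end Matrix.PosSemidef

namespace SRMAux

variable {d : Type*} [Fintype d] [DecidableEq d]

lemma trace_re_nonneg {A : Matrix d d ℂ} (hA : A.PosSemidef) : 0 ≤ A.trace.re := by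
  rw [Matrix.trace, Complex.re_sum]
  refine Finset.sum_nonneg fun i _ => ?_
  have h := hA.re_dotProduct_nonneg (Pi.single i 1)
  have e : star (Pi.single i (1:ℂ)) ⬝ᵥ (A *ᵥ Pi.single i 1) = A i i := by
    simp [dotProduct, Matrix.mulVec, Pi.single_apply, Finset.sum_ite_eq,
      apply_ite (star : ℂ → ℂ)]
  rwa [e] at h

lemma trace_mul_re_nonneg {A B : Matrix d d ℂ} (hA : A.PosSemidef) (hB : B.PosSemidef) :
    0 ≤ ((A * B).trace).re := by
  have hC := hB.posSemidef_sqrt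
  have hCC : hB.sqrt * hB.sqrt = B := hB.sqrt_mul_self
  have h1 : (A * B).trace = (hB.sqrt * A * hB.sqrt).trace := by
    conv_lhs => rw [← hCC]
    rw [← Matrix.mul_assoc, Matrix.trace_mul_cycle]
  rw [h1]
  have h2 : (hB.sqrtᴴ * A * hB.sqrt).PosSemidef := hA.conjTranspose_mul_mul_same _
  rw [hC.1.eq] at h2
  exact trace_re_nonneg h2

lemma trace_mul_mono {A B ρ : Matrix d d ℂ} (h : (B - A).PosSemidef) (hρ : ρ.PosSemidef) :
    ((A * ρ).trace).re ≤ ((B * ρ).trace).re := by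
  have := trace_mul_re_nonneg h hρ
  rw [Matrix.sub_mul, Matrix.trace_sub, Complex.sub_re] at this
  linarith

lemma psd_of_sq_le {X Y : Matrix d d ℂ} (hX : X.PosSemidef) (hY : Y.PosSemidef)
    (h : (Y * Y - X * X).PosSemidef) : (Y - X).PosSemidef := by
  have hD : (Y - X).IsHermitian := hY.1.sub hX.1
  apply hD.posSemidef_iff_eigenvalues_nonneg.mpr
  intro i
  show (0:ℝ) ≤ _
  set lam : ℝ := hD.eigenvalues i with hlam
  set v : d → ℂ := ⇑(hD.eigenvectorBasis i) with hv
  have hv0 : v ≠ 0 := (WithLp.ofLp_eq_zero 2).ne.2 <| hD.eigenvectorBasis.orthonormal.ne_zero i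
  have hDv : (Y - X) *ᵥ v = (lam : ℂ) • v := by
    rw [hv, hlam]; convert hD.mulVec_eigenvectorBasis i using 1
    exact (RCLike.real_smul_eq_coe_smul (K := ℂ) _ _).symm
  have hsplit : Y * Y - X * X = Y * (Y - X) + (Y - X) * X := by noncomm_ring
  have key : star v ⬝ᵥ ((Y * Y - X * X) *ᵥ v)
      = (lam : ℂ) * (star v ⬝ᵥ (Y *ᵥ v) + star v ⬝ᵥ (X *ᵥ v)) := by
    rw [hsplit, Matrix.add_mulVec, dotProduct_add]
    rw [← Matrix.mulVec_mulVec, ← Matrix.mulVec_mulVec, hDv]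
    rw [Matrix.mulVec_smul, dotProduct_smul]
    have h3 : star v ⬝ᵥ ((Y - X) *ᵥ (X *ᵥ v)) = (lam : ℂ) * (star v ⬝ᵥ (X *ᵥ v)) := by
      rw [Matrix.dotProduct_mulVec]
      have hvm : star v ᵥ* (Y - X) = (lam : ℂ) • star v := by
        have h' := congrArg star hDv
        rw [Matrix.star_mulVec, hD.eq, star_smul] at h'
        simpa using h'
      rw [hvm, smul_dotProduct, smul_eq_mul]
    rw [h3, smul_eq_mul, mul_add]
  have hnn := h.re_dotProduct_nonneg v
  rw [key] at hnn
  set a := star v ⬝ᵥ (Y *ᵥ v) with ha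
  set b := star v ⬝ᵥ (X *ᵥ v) with hb
  have hre : ((lam : ℂ) * (a + b)).re = lam * (a.re + b.re) := by
    rw [Complex.mul_re]
    simp
  simp only [RCLike.re_to_complex] at hnn
  rw [hre] at hnn
  have hya := hY.dotProduct_mulVec_nonneg v
  have hxb := hX.dotProduct_mulVec_nonneg v
  have hann : 0 ≤ a.re := hY.re_dotProduct_nonneg v
  have hbnn : 0 ≤ b.re := hX.re_dotProduct_nonneg v
  rcases lt_or_eq_of_le (by linarith : (0:ℝ) ≤ a.re + b.re) with hpos | hzero
  · by_contra hneg
    push_neg at hneg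
    nlinarith
  · have ha0 : a.re = 0 := by linarith
    have hb0 : b.re = 0 := by linarith
    have haz : a = 0 := by
      rcases (RCLike.nonneg_iff (K := ℂ)).mp hya with ⟨_, him⟩
      exact Complex.ext ha0 him
    have hbz : b = 0 := by
      rcases (RCLike.nonneg_iff (K := ℂ)).mp hxb with ⟨_, him⟩
      exact Complex.ext hb0 him
    have hYv : Y *ᵥ v = 0 := (hY.dotProduct_mulVec_zero_iff v).mp haz
    have hXv : X *ᵥ v = 0 := (hX.dotProduct_mulVec_zero_iff v).mp hbz
    have hz : (lam : ℂ) • v = 0 := by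
      rw [← hDv, Matrix.sub_mulVec, hYv, hXv, sub_zero]
    rcases smul_eq_zero.mp hz with hl | hv'
    · simp [Complex.ofReal_eq_zero] at hl
      exact le_of_eq hl.symm
    · exact absurd hv' hv0

end SRMAux

open SRMAux in
/-- Error bound for a square-root measurement element: with `0 ≤ P_k ≤ I`,
`S = Σ_k P_k` positive definite, `Λ_m = S^{−1/2} P_m S^{−1/2}` and `ρ` a density matrix,
`Tr[(I − Λ_m) ρ] ≤ 2 Tr[(I − P_m) ρ] + 4 Σ_{k ≠ m} Tr[P_k ρ]`. -/
theorem srm_error_bound {M d : Type*} [Fintype M] [DecidableEq M] [Fintype d] [DecidableEq d]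
    (P : M → Matrix d d ℂ)
    (hP : ∀ k, (P k).PosSemidef ∧ ((1 : Matrix d d ℂ) - P k).PosSemidef)
    (hS : (∑ k, P k).PosDef)
    (m : M) (ρ : Matrix d d ℂ) (hρ : ρ.PosSemidef) (hρ1 : ρ.trace = 1) :
    ((((1 : Matrix d d ℂ) -
        (hS.posSemidef.sqrt)⁻¹ * P m * (hS.posSemidef.sqrt)⁻¹) * ρ).trace).re ≤
      2 * ((((1 : Matrix d d ℂ) - P m) * ρ).trace).re +
        4 * ∑ k ∈ Finset.univ.erase m, ((P k * ρ).trace).re := by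
  set S : Matrix d d ℂ := ∑ k, P k with hSdef
  set R : Matrix d d ℂ := hS.posSemidef.sqrt with hRdef
  have hR : R.PosSemidef := hS.posSemidef.posSemidef_sqrt
  have hRR : R * R = S := hS.posSemidef.sqrt_mul_self
  have hdet : IsUnit R.det := by
    have h1 : IsUnit (R.det * R.det) := by
      rw [← Matrix.det_mul, hRR]
      exact hS.isUnit.map Matrix.detMonoidHom
    exact isUnit_of_mul_isUnit_left h1
  set L : Matrix d d ℂ := R⁻¹ with hLdef
  have hLR : L * R = 1 := Matrix.nonsing_inv_mul R hdet
  have hRL : R * L = 1 := Matrix.mul_nonsing_inv R hdet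
  have hL : L.PosSemidef := hR.inv
  have hLS : L * S = R := by rw [← hRR, ← Matrix.mul_assoc, hLR, Matrix.one_mul]
  have hSL : S * L = R := by rw [← hRR, Matrix.mul_assoc, hRL, Matrix.mul_one]
  have hLSL : L * S * L = 1 := by rw [hLS, hRL]
  set T : Matrix d d ℂ := P m with hTdef
  set T' : Matrix d d ℂ := S - T with hT'def
  have hTT' : T + T' = S := by rw [hT'def]; abel
  have hT'sum : T' = ∑ k ∈ Finset.univ.erase m, P k := by
    rw [hT'def, sub_eq_iff_eq_add]
    exact (Finset.sum_erase_add _ _ (Finset.mem_univ m)).symm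
  have hT : T.PosSemidef := (hP m).1
  have hT1 : ((1 : Matrix d d ℂ) - T).PosSemidef := (hP m).2
  have hT' : T'.PosSemidef := by
    rw [hT'sum]
    exact Finset.sum_induction _ _ (fun a b ha hb => ha.add hb) Matrix.PosSemidef.zero
      (fun k _ => (hP k).1)
  have hId : (1 : Matrix d d ℂ) - L * T * L = L * T' * L := by
    rw [hT'def, Matrix.mul_sub, Matrix.sub_mul, hLSL]
  set A : Matrix d d ℂ := L - 1 with hAdef
  have hAH : A.IsHermitian := hL.1.sub Matrix.isHermitian_one
  have hE1 : (A * T' * A + T' - A * T' - T' * A).PosSemidef := by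
    have h0 : ((A - 1)ᴴ * T' * (A - 1)).PosSemidef := hT'.conjTranspose_mul_mul_same _
    have he : (A - 1)ᴴ * T' * (A - 1) = A * T' * A + T' - A * T' - T' * A := by
      rw [Matrix.conjTranspose_sub, hAH.eq, Matrix.conjTranspose_one]
      noncomm_ring
    rwa [he] at h0
  have hE2 : (A * T * A).PosSemidef := by
    have h0 : (Aᴴ * T * A).PosSemidef := hT.conjTranspose_mul_mul_same _
    rwa [hAH.eq] at h0
  have hRT : (R - T).PosSemidef := by
    apply psd_of_sq_le hT hR
    rw [hRR]
    have h1 : (T - T * T).PosSemidef := by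
      set C : Matrix d d ℂ := hT.sqrt with hC
      have hCH : Cᴴ = C := hT.posSemidef_sqrt.1.eq
      have hCm : C * C = T := hT.sqrt_mul_self
      clear_value C
      have h0 : (Cᴴ * ((1:Matrix d d ℂ) - T) * C).PosSemidef :=
        hT1.conjTranspose_mul_mul_same _
      have he : Cᴴ * ((1:Matrix d d ℂ) - T) * C = T - T * T := by
        rw [hCH, ← hCm]; noncomm_ring
      rwa [he] at h0
    have h2 : S - T * T = T' + (T - T * T) := by rw [hT'def]; abel
    rw [h2]
    exact hT'.add h1
  have hATA : A * T * A + A * T' * A = 1 - R - R + S := by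
    have c1 : A * T * A + A * T' * A
        = L * ((T + T') * L) - (T + T') * L - L * (T + T') + (T + T') := by
      rw [hAdef]; noncomm_ring
    rw [c1, hTT', hSL, hLS, hLR]
  have hfinal : ((((1:Matrix d d ℂ) - T) + (1 - T) + T' + T' + T' + T') - L * T' * L).PosSemidef := by
    have hATA' : A * T * A = 1 - R - R + S - A * T' * A := by rw [← hATA]; abel
    have hEq : (((1:Matrix d d ℂ) - T) + (1 - T) + T' + T' + T' + T') - L * T' * L
        = (A * T' * A + T' - A * T' - T' * A) + (A * T * A + A * T * A)
          + ((R - T) + (R - T) + (R - T) + (R - T)) := by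
      rw [hATA', ← hTT', hAdef]
      noncomm_ring
    rw [hEq]
    exact (hE1.add (hE2.add hE2)).add (((hRT.add hRT).add hRT).add hRT)
  have hmono := trace_mul_mono hfinal hρ
  rw [hId]
  refine le_trans hmono ?_
  have hexp : (((((1:Matrix d d ℂ) - T) + (1 - T) + T' + T' + T' + T') * ρ).trace).re
      = 2 * ((((1:Matrix d d ℂ) - T) * ρ).trace).re + 4 * ((T' * ρ).trace).re := by
    simp only [Matrix.add_mul, Matrix.trace_add, Complex.add_re]
    ring
  rw [hexp]
  have hsum : ((T' * ρ).trace).re = ∑ k ∈ Finset.univ.erase m, ((P k * ρ).trace).re := by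
    rw [hT'sum, Finset.sum_mul, Matrix.trace_sum, Complex.re_sum]
  rw [hsum]
end
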